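/- Let A be an m×n complex matrix and B an m×k complex matrix. Then rank(A) + rank((I - A A⁺) B) = rank(B) + rank((I - B B⁺) A) = rank of the block matrix [A B], where A⁺ denotes the Moore–Penrose inverse. -/

import Mathlib

open Matrix

/-- `Ap` is the Moore–Penrose inverse of `A`. -/
def IsMoorePenrose {m n : ℕ} (A : Matrix (Fin m) (Fin n) ℂ)
    (Ap : Matrix (Fin n) (Fin m) ℂ) : Prop :=
  A * Ap * A = A ∧ Ap * A * Ap = Ap ∧ (A * Ap)ᴴ = A * Ap ∧ (Ap * A)ᴴ = Ap * A

lemma range_fromColumns_aux {m n k : ℕ} (A : Matrix (Fin m) (Fin n) ℂ)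
    (B : Matrix (Fin m) (Fin k) ℂ) :
    LinearMap.range (fromCols A B).mulVecLin =
      LinearMap.range A.mulVecLin ⊔ LinearMap.range B.mulVecLin := by
  apply le_antisymm
  · rintro v ⟨x, rfl⟩
    rw [mulVecLin_apply]
    have he : Sum.elim (x ∘ Sum.inl) (x ∘ Sum.inr) = x := by ext (i | i) <;> rfl
    rw [← he, fromCols_mulVec_sumElim]
    exact Submodule.add_mem_sup ⟨_, rfl⟩ ⟨_, rfl⟩
  · rw [sup_le_iff]
    constructor
    · rintro v ⟨x, rfl⟩
      exact ⟨Sum.elim x 0, by simp [fromCols_mulVec_sumElim]⟩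
    · rintro v ⟨x, rfl⟩
      exact ⟨Sum.elim 0 x, by simp [fromCols_mulVec_sumElim]⟩

lemma rank_key {m n k : ℕ} (A : Matrix (Fin m) (Fin n) ℂ) (B : Matrix (Fin m) (Fin k) ℂ)
    (Ap : Matrix (Fin n) (Fin m) ℂ) (h : A * Ap * A = A) :
    A.rank + ((1 - A * Ap) * B).rank =
      Module.finrank ℂ ((LinearMap.range A.mulVecLin ⊔ LinearMap.range B.mulVecLin :
        Submodule ℂ (Fin m → ℂ)) : Submodule ℂ (Fin m → ℂ)) := by
  set C := (1 - A * Ap) * B with hC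
  have hsup : LinearMap.range A.mulVecLin ⊔ LinearMap.range C.mulVecLin =
      LinearMap.range A.mulVecLin ⊔ LinearMap.range B.mulVecLin := by
    apply le_antisymm <;> rw [sup_le_iff] <;>
      refine ⟨le_sup_left, ?_⟩
    · rintro v ⟨x, rfl⟩
      rw [mulVecLin_apply, hC, Matrix.sub_mul, Matrix.one_mul, Matrix.sub_mulVec]
      refine sub_mem (Submodule.mem_sup_right ⟨x, rfl⟩) (Submodule.mem_sup_left ?_)
      exact ⟨(Ap * B) *ᵥ x, by rw [mulVecLin_apply, Matrix.mulVec_mulVec, Matrix.mul_assoc]⟩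
    · rintro v ⟨x, rfl⟩
      have : B *ᵥ x = C *ᵥ x + (A * Ap * B) *ᵥ x := by
        rw [hC, Matrix.sub_mul, Matrix.one_mul, Matrix.sub_mulVec, sub_add_cancel]
      rw [mulVecLin_apply, this]
      refine add_mem (Submodule.mem_sup_right ⟨x, rfl⟩) (Submodule.mem_sup_left ?_)
      exact ⟨(Ap * B) *ᵥ x, by rw [mulVecLin_apply, Matrix.mulVec_mulVec, Matrix.mul_assoc]⟩
  have hPC : A * Ap * C = 0 := by
    rw [hC, ← Matrix.mul_assoc, Matrix.mul_sub, Matrix.mul_one]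
    have : A * Ap * (A * Ap) = A * Ap := by rw [← Matrix.mul_assoc, h]
    rw [this, sub_self, Matrix.zero_mul]
  have hdisj : LinearMap.range A.mulVecLin ⊓ LinearMap.range C.mulVecLin = ⊥ := by
    rw [eq_bot_iff]
    rintro v ⟨⟨x, hx⟩, ⟨y, hy⟩⟩
    have h1 : (A * Ap) *ᵥ v = v := by
      rw [← hx, mulVecLin_apply, Matrix.mulVec_mulVec, Matrix.mul_assoc, ← Matrix.mul_assoc, h]
    have h2 : (A * Ap) *ᵥ v = 0 := by
      rw [← hy, mulVecLin_apply, Matrix.mulVec_mulVec, hPC, Matrix.zero_mulVec]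
    rw [Submodule.mem_bot, ← h1, h2]
  have := Submodule.finrank_sup_add_finrank_inf_eq
    (LinearMap.range A.mulVecLin) (LinearMap.range C.mulVecLin)
  rw [hdisj, finrank_bot, add_zero, hsup] at this
  rw [Matrix.rank, Matrix.rank, ← this]

theorem rank_add_rank_proj_col {m n k : ℕ}
    (A : Matrix (Fin m) (Fin n) ℂ) (B : Matrix (Fin m) (Fin k) ℂ)
    (Ap : Matrix (Fin n) (Fin m) ℂ) (Bp : Matrix (Fin k) (Fin m) ℂ)
    (hA : IsMoorePenrose A Ap) (hB : IsMoorePenrose B Bp) :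
    A.rank + ((1 - A * Ap) * B).rank = B.rank + ((1 - B * Bp) * A).rank ∧
    B.rank + ((1 - B * Bp) * A).rank = (Matrix.fromCols A B).rank := by
  have kA := rank_key A B Ap hA.1
  have kB := rank_key B A Bp hB.1
  rw [sup_comm] at kB
  have hcol : (Matrix.fromCols A B).rank =
      Module.finrank ℂ ((LinearMap.range A.mulVecLin ⊔ LinearMap.range B.mulVecLin :
        Submodule ℂ (Fin m → ℂ)) : Submodule ℂ (Fin m → ℂ)) := by
    rw [Matrix.rank, range_fromColumns_aux]
  exact ⟨kA.trans kB.symm, kB.trans hcol.symm⟩
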